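/- Let K be a field in which -1 is not a square, and let D be a subring of K such that 1/(1+x^2) ∈ D for every x ∈ K (a Dress ring). Then for all a, b ∈ D, the square of the ideal of D generated by a and b equals the principal ideal generated by a^2 + b^2; that is, (Ideal.span {a,b})^2 = Ideal.span {a^2 + b^2} as ideals of D. -/
import Mathlib


/-- If `K` is a field in which `-1` is not a square and `D` is a
Dress ring in `K` (a subring containing `1/(1+x^2)` for every `x ∈ K`), then for all
`a, b ∈ D` the square of the ideal `(a, b)` of `D` is the principal ideal `(a² + b²)`. -/
theorem dress_ring_span_pair_sq (K : Type*) [Field K] (hK : ¬ IsSquare (-1 : K))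
    (D : Subring K) (hD : ∀ x : K, ((1 + x ^ 2)⁻¹ : K) ∈ D) (a b : D) :
    (Ideal.span {a, b}) ^ 2 = Ideal.span {a ^ 2 + b ^ 2} := by
  have hne : ∀ x : K, 1 + x ^ 2 ≠ 0 := by
    intro x hx
    exact hK ⟨x, by linear_combination -hx⟩
  have h2 : (2 : K) ≠ 0 := by
    have := hne 1; norm_num at this; exact this
  have hhalf : ((2 : K)⁻¹) ∈ D := by
    have := hD 1; norm_num at this; exact this
  have hkey : ∀ x : K, x / (1 + x ^ 2) ∈ D := by
    intro x
    by_cases hx1 : x = 1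
    · subst hx1
      have : (1 : K) / (1 + 1 ^ 2) = (2 : K)⁻¹ := by norm_num
      rw [this]; exact hhalf
    · have h1x : (1 : K) - x ≠ 0 := sub_ne_zero.mpr (Ne.symm hx1)
      set y : K := (1 + x) / (1 - x) with hy
      have hxy : x / (1 + x ^ 2) = (2 : K)⁻¹ - (1 + y ^ 2)⁻¹ := by
        have e1 : (1 : K) + y ^ 2 = 2 * (1 + x ^ 2) / (1 - x) ^ 2 := by
          rw [hy]; field_simp; ring
        rw [e1, inv_div, inv_eq_one_div, div_sub_div _ _ h2 (mul_ne_zero h2 (hne x)),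
          div_eq_div_iff (hne x) (mul_ne_zero h2 (mul_ne_zero h2 (hne x)))]
        ring
      rw [hxy]; exact sub_mem hhalf (hD y)
  -- dvd facts
  by_cases hs0 : ((a : K) ^ 2 + (b : K) ^ 2) = 0
  · -- then a = b = 0
    have hb : (b : K) = 0 := by
      by_contra hb
      have : ((a : K) / b) ^ 2 = -1 := by
        field_simp
        linear_combination hs0
      exact hK ⟨(a : K) / b, by rw [← this]; ring⟩
    have ha : (a : K) = 0 := by
      rw [hb] at hs0; simpa [pow_eq_zero_iff] using hs0
    have ha' : a = 0 := Subtype.ext ha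
    have hb' : b = 0 := Subtype.ext hb
    subst ha'; subst hb'
    have h0 : ({(0 : D), (0 : D)} : Set D) = {0} := by simp
    have h1 : (0 : D) ^ 2 + 0 ^ 2 = 0 := by ring
    rw [h1, h0, Ideal.span_singleton_eq_bot.mpr rfl, pow_two, Ideal.mul_bot]
  · set s : D := a ^ 2 + b ^ 2 with hsdef
    have hsK : (s : K) = (a : K) ^ 2 + (b : K) ^ 2 := by push_cast [hsdef]; ring
    have hs : (s : K) ≠ 0 := by rw [hsK]; exact hs0
    have hdvd_sq : ∀ c d : D, (c : K) ^ 2 + (d : K) ^ 2 = (s : K) → s ∣ c ^ 2 := by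
      intro c d hcd
      by_cases hc : (c : K) = 0
      · have : c = 0 := Subtype.ext hc
        rw [this]; simp
      · refine ⟨⟨(c : K) ^ 2 / (s : K), ?_⟩, ?_⟩
        · have : (c : K) ^ 2 / (s : K) = (1 + ((d : K) / c) ^ 2)⁻¹ := by
            rw [← hcd]; field_simp
          rw [this]; exact hD _
        · ext; push_cast; field_simp
    have ha2 : s ∣ a ^ 2 := hdvd_sq a b hsK.symm
    have hb2 : s ∣ b ^ 2 := hdvd_sq b a (by rw [hsK]; ring)
    have hab : s ∣ a * b := by
      by_cases hb : (b : K) = 0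
      · have : b = 0 := Subtype.ext hb
        rw [this]; simp
      · have hd : (a : K) ^ 2 * b + (b : K) ^ 3 ≠ 0 := by
          have hmul := mul_ne_zero hb hs0
          intro h; exact hmul (by linear_combination h)
        refine ⟨⟨(a : K) * b / (s : K), ?_⟩, ?_⟩
        · have : (a : K) * b / (s : K) = ((a : K) / b) / (1 + ((a : K) / b) ^ 2) := by
            rw [hsK, div_eq_div_iff hs0 (hne ((a : K) / b))]
            field_simp
            ring
          rw [this]; exact hkey _
        · ext; push_cast; field_simp
    apply le_antisymm
    · rw [pow_two, Ideal.mul_le]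
      intro r hr t ht
      rw [Ideal.mem_span_pair] at hr ht
      obtain ⟨c, d, rfl⟩ := hr
      obtain ⟨e, f, rfl⟩ := ht
      rw [Ideal.mem_span_singleton]
      have : (c * a + d * b) * (e * a + f * b)
          = (c * e) * a ^ 2 + (c * f + d * e) * (a * b) + (d * f) * b ^ 2 := by ring
      rw [this]
      exact dvd_add (dvd_add (ha2.mul_left _) (hab.mul_left _)) (hb2.mul_left _)
    · rw [Ideal.span_le, Set.singleton_subset_iff, SetLike.mem_coe, pow_two]
      have ha' : a ∈ Ideal.span ({a, b} : Set D) := Ideal.subset_span (by simp)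
      have hb' : b ∈ Ideal.span ({a, b} : Set D) := Ideal.subset_span (by simp)
      have hrw : a ^ 2 + b ^ 2 = a * a + b * b := by ring
      rw [hsdef, hrw]
      exact add_mem (Ideal.mul_mem_mul ha' ha') (Ideal.mul_mem_mul hb' hb')
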